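/- Let R be a principal ideal domain and g ≥ 1. Then the symplectic group Sp_{2g}(R) acts transitively on the set of unimodular vectors of R^{2g}: for any two vectors v, w ∈ R^{2g} each of whose coordinates generate the unit ideal of R, there exists A ∈ Sp_{2g}(R) with A(v) = w. -/

import Mathlib

/-- The standard symplectic form on `R^n` (interleaved hyperbolic pairs), i.e. the form of the
hyperbolic formed space `H^{⊕ g}` when `n = 2g`. -/
def omegaH (R : Type) [CommRing R] (n : ℕ) (x y : Fin n → R) : R :=
  ∑ i : Fin n, ∑ j : Fin n, (if (i : ℕ) % 2 = 0 ∧ (j : ℕ) = (i : ℕ) + 1 then x i * y j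
    else if (j : ℕ) % 2 = 0 ∧ (i : ℕ) = (j : ℕ) + 1 then -(x i * y j) else 0)

namespace SpAux

/-- The standard symplectic Gram "matrix" entries. -/
def stdJ (R : Type) [CommRing R] (n : ℕ) (i j : Fin n) : R :=
  if (i : ℕ) % 2 = 0 ∧ (j : ℕ) = (i : ℕ) + 1 then 1
  else if (j : ℕ) % 2 = 0 ∧ (i : ℕ) = (j : ℕ) + 1 then -1 else 0

variable {R : Type} [CommRing R]

lemma stdJ_skew {n : ℕ} (i j : Fin n) : stdJ R n i j = - stdJ R n j i := by
  unfold stdJ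
  split_ifs <;> first | omega | norm_num

lemma stdJ_diag {n : ℕ} (i : Fin n) : stdJ R n i i = 0 := by
  unfold stdJ
  split_ifs <;> first | rfl | omega

def partner {n : ℕ} (hn : n % 2 = 0) (i : Fin n) : Fin n :=
  ⟨if (i : ℕ) % 2 = 0 then (i : ℕ) + 1 else (i : ℕ) - 1, by
    have := i.isLt; split_ifs <;> omega⟩

lemma coe_partner {n : ℕ} (hn : n % 2 = 0) (i : Fin n) :
    ((partner hn i : Fin n) : ℕ) = if (i : ℕ) % 2 = 0 then (i : ℕ) + 1 else (i : ℕ) - 1 := rfl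

lemma partner_partner {n : ℕ} (hn : n % 2 = 0) (i : Fin n) :
    partner hn (partner hn i) = i := by
  apply Fin.ext
  rw [coe_partner, coe_partner]
  have := i.isLt
  by_cases hi : (i : ℕ) % 2 = 0
  · rw [if_pos hi, if_neg (by omega)]; omega
  · rw [if_neg hi, if_pos (by omega)]; omega

lemma stdJ_col_zero {n : ℕ} (hn : n % 2 = 0) (i j : Fin n) (h : i ≠ partner hn j) :
    stdJ R n i j = 0 := by
  have hne : (i : ℕ) ≠ ((partner hn j : Fin n) : ℕ) := fun hc => h (Fin.ext hc)
  rw [coe_partner] at hne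
  unfold stdJ
  by_cases hj : (j : ℕ) % 2 = 0
  · rw [if_pos hj] at hne; split_ifs <;> first | rfl | omega
  · rw [if_neg hj] at hne; split_ifs <;> first | rfl | omega

lemma stdJ_partner {n : ℕ} (hn : n % 2 = 0) (j : Fin n) :
    stdJ R n (partner hn j) j = if (j : ℕ) % 2 = 0 then -1 else 1 := by
  have hv := coe_partner hn j
  unfold stdJ
  have := j.isLt
  by_cases hj : (j : ℕ) % 2 = 0
  · rw [if_pos hj] at hv
    rw [hv, if_pos hj, if_neg (by omega), if_pos (by omega)]
  · rw [if_neg hj] at hv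
    rw [hv, if_neg hj, if_pos (by omega)]

lemma partner_parity {n : ℕ} (hn : n % 2 = 0) (j : Fin n) :
    ((partner hn j : Fin n) : ℕ) % 2 = if (j : ℕ) % 2 = 0 then 1 else 0 := by
  rw [coe_partner]
  by_cases hj : (j : ℕ) % 2 = 0
  · rw [if_pos hj, if_pos hj]; omega
  · rw [if_neg hj, if_neg hj]; omega

/-- The standard symplectic form as a bilinear map. -/
def Bform (R : Type) [CommRing R] (n : ℕ) : (Fin n → R) →ₗ[R] (Fin n → R) →ₗ[R] R :=
  LinearMap.mk₂ R (fun x y => ∑ i : Fin n, ∑ j : Fin n, x i * stdJ R n i j * y j)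
    (fun x x' y => by
      simp only [Pi.add_apply, add_mul]
      rw [← Finset.sum_add_distrib]
      exact Finset.sum_congr rfl fun i _ => by rw [← Finset.sum_add_distrib])
    (fun r x y => by
      simp only [Pi.smul_apply, smul_eq_mul, Finset.mul_sum]
      exact Finset.sum_congr rfl fun i _ => Finset.sum_congr rfl fun j _ => by ring)
    (fun x y y' => by
      simp only [Pi.add_apply, mul_add]
      rw [← Finset.sum_add_distrib]
      exact Finset.sum_congr rfl fun i _ => by rw [← Finset.sum_add_distrib])
    (fun r x y => by
      simp only [Pi.smul_apply, smul_eq_mul, Finset.mul_sum]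
      exact Finset.sum_congr rfl fun i _ => Finset.sum_congr rfl fun j _ => by ring)

lemma Bform_apply (n : ℕ) (x y : Fin n → R) :
    Bform R n x y = ∑ i : Fin n, ∑ j : Fin n, x i * stdJ R n i j * y j := rfl

lemma omegaH_eq_Bform (n : ℕ) (x y : Fin n → R) :
    omegaH R n x y = Bform R n x y := by
  rw [Bform_apply]
  unfold omegaH stdJ
  refine Finset.sum_congr rfl fun i _ => Finset.sum_congr rfl fun j _ => ?_
  split_ifs <;> ring

lemma Bform_alt (n : ℕ) (x : Fin n → R) : Bform R n x x = 0 := by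
  rw [Bform_apply, ← Finset.sum_product']
  refine Finset.sum_ninvolution (fun p => (p.2, p.1)) ?_ ?_ (fun _ => Finset.mem_univ _)
    (fun p => rfl)
  · intro p
    show x p.1 * stdJ R n p.1 p.2 * x p.2 + x p.2 * stdJ R n p.2 p.1 * x p.1 = 0
    rw [show stdJ R n p.2 p.1 = - stdJ R n p.1 p.2 from stdJ_skew _ _]
    ring
  · intro p hp hpp
    apply hp
    have h1 : p.2 = p.1 := congrArg Prod.fst hpp
    show x p.1 * stdJ R n p.1 p.2 * x p.2 = 0
    rw [h1, stdJ_diag]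
    ring

lemma Bform_surj (n : ℕ) (hn : n % 2 = 0) (φ : (Fin n → R) →ₗ[R] R) :
    ∃ y, Bform R n y = φ := by
  set y : Fin n → R := fun i => if (i : ℕ) % 2 = 0 then φ (Pi.single (partner hn i) 1)
    else - φ (Pi.single (partner hn i) 1) with hy
  refine ⟨y, ?_⟩
  apply (Pi.basisFun R (Fin n)).ext
  intro j
  rw [Pi.basisFun_apply, Bform_apply]
  have hinner : ∀ i : Fin n,
      (∑ j' : Fin n, y i * stdJ R n i j' * (Pi.single j 1 : Fin n → R) j') =
        y i * stdJ R n i j := by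
    intro i
    rw [Finset.sum_eq_single j]
    · rw [Pi.single_eq_same, mul_one]
    · intro b _ hb
      rw [Pi.single_eq_of_ne hb, mul_zero]
    · intro h; exact absurd (Finset.mem_univ _) h
  rw [Finset.sum_congr rfl fun i _ => hinner i]
  rw [Finset.sum_eq_single (partner hn j)]
  · rw [stdJ_partner hn j]
    rw [show y (partner hn j) = if ((partner hn j : Fin n) : ℕ) % 2 = 0
        then φ (Pi.single (partner hn (partner hn j)) 1)
        else - φ (Pi.single (partner hn (partner hn j)) 1) from rfl]
    rw [partner_parity hn j, partner_partner hn j]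
    by_cases hj : (j : ℕ) % 2 = 0
    · rw [if_pos hj, if_pos hj, if_neg (by omega)]; ring
    · rw [if_neg hj, if_neg hj, if_pos (by omega)]; ring
  · intro b _ hb
    rw [stdJ_col_zero hn b j hb, mul_zero]
  · intro h; exact absurd (Finset.mem_univ _) h


section Ind
variable {R : Type} [CommRing R]

lemma exists_symp_basis (R : Type) [CommRing R] [IsDomain R] [IsPrincipalIdealRing R] (k : ℕ) :
    ∀ (M : Type) [AddCommGroup M] [Module R M] (b0 : Module.Basis (Fin k) R M)
      (B : M →ₗ[R] M →ₗ[R] R), (∀ x, B x x = 0) →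
      (∀ φ : M →ₗ[R] R, ∃ y, B y = φ) →
      ∀ (v : M) (f : M →ₗ[R] R), f v = 1 →
      ∃ b : Module.Basis (Fin k) R M, (∀ h : 0 < k, b ⟨0, h⟩ = v) ∧
        ∀ i j, B (b i) (b j) = stdJ R k i j := by
  induction k using Nat.strong_induction_on with
  | _ k IH =>
  intro M _ _ b0 B halt hsurj v f hfv
  by_cases hk : k = 0
  · subst hk
    exact ⟨b0, fun h => absurd h (lt_irrefl 0), fun i _ => i.elim0⟩
  -- antisymmetry
  have hskew : ∀ x y : M, B x y = - B y x := by
    intro x y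
    have h := halt (x + y)
    simp only [map_add, LinearMap.add_apply, halt x, halt y] at h
    linear_combination h
  -- find u with B v u = 1
  obtain ⟨yy, hyy⟩ := hsurj f
  set u : M := -yy with hu
  have hvu : B v u = 1 := by
    have h1 : B yy v = 1 := by rw [hyy]; exact hfv
    rw [hu, map_neg, hskew v yy, h1]
    simp only [neg_neg]
  -- the symplectic complement W of (v, u)
  set W : Submodule R M := LinearMap.ker (B v) ⊓ LinearMap.ker (B u) with hW
  have hmemW : ∀ x : M, x ∈ W ↔ B v x = 0 ∧ B u x = 0 := by
    intro x
    simp [hW, Submodule.mem_inf, LinearMap.mem_ker]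
  -- the projection onto W
  set π : M →ₗ[R] M :=
    LinearMap.id - ((B.flip u).smulRight v) + ((B.flip v).smulRight u) with hπ
  have hπ_apply : ∀ x : M, π x = x - B x u • v + B x v • u := by
    intro x
    simp [hπ, LinearMap.smulRight_apply, LinearMap.flip_apply]
  have hπ_mem : ∀ x : M, π x ∈ W := by
    intro x
    rw [hmemW]
    constructor
    · rw [hπ_apply]
      simp only [map_add, map_sub, map_smul, smul_eq_mul, halt v, hvu, mul_zero, mul_one]
      linear_combination hskew x v
    · rw [hπ_apply]
      have huv : B u v = -1 := by rw [hskew u v, hvu]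
      simp only [map_add, map_sub, map_smul, smul_eq_mul, halt u, huv, mul_zero, mul_one]
      linear_combination hskew x u
  have hπ_fix : ∀ x : M, x ∈ W → π x = x := by
    intro x hx
    rw [hmemW] at hx
    have h1 : B x u = 0 := by rw [hskew x u, hx.2]; ring
    have h2 : B x v = 0 := by rw [hskew x v, hx.1]; ring
    rw [hπ_apply, h1, h2]
    simp
  set πW : M →ₗ[R] W := LinearMap.codRestrict W π hπ_mem with hπW
  -- basis of W
  obtain ⟨m, c⟩ := Submodule.basisOfPid b0 W
  -- any basis of W extends to a basis of M by adding v and u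
  have key : ∀ c' : Module.Basis (Fin m) R W, ∃ e : Module.Basis (Fin m ⊕ Fin 2) R M,
      (∀ i : Fin m, e (Sum.inl i) = (c' i : M)) ∧
        e (Sum.inr ⟨0, by omega⟩) = v ∧ e (Sum.inr ⟨1, by omega⟩) = u := by
    intro c'
    have hspan_c : Submodule.span R (Set.range fun i : Fin m => (c' i : M)) = W := by
      have h1 : (Set.range fun i : Fin m => (c' i : M)) = W.subtype '' Set.range c' := by
        ext x
        simp [Submodule.coe_subtype]
      rw [h1, ← Submodule.map_span, c'.span_eq, Submodule.map_subtype_top]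
    have hli_c : LinearIndependent R fun i : Fin m => (c' i : M) :=
      c'.linearIndependent.map' W.subtype W.ker_subtype
    have hli_p : LinearIndependent R ![v, u] := by
      rw [Fintype.linearIndependent_iff]
      intro gc hg
      rw [Fin.sum_univ_two] at hg
      simp only [Matrix.cons_val_zero, Matrix.cons_val_one, Matrix.head_cons] at hg
      have h1 : B v (gc 0 • v + gc 1 • u) = gc 1 := by
        simp [map_add, map_smul, smul_eq_mul, halt v, hvu]
      have h0 : B (gc 0 • v + gc 1 • u) u = gc 0 := by
        simp only [map_add, LinearMap.add_apply, map_smul, LinearMap.smul_apply,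
          smul_eq_mul, halt u, hvu, mul_zero, mul_one, add_zero]
      rw [hg, map_zero] at h1
      rw [hg] at h0
      simp only [map_zero, LinearMap.zero_apply] at h0
      intro i
      fin_cases i
      · exact h0.symm
      · exact h1.symm
    have hdisj : Disjoint (Submodule.span R (Set.range fun i : Fin m => (c' i : M)))
        (Submodule.span R (Set.range ![v, u])) := by
      rw [hspan_c, Submodule.disjoint_def]
      intro x hxW hxP
      have hr : Set.range ![v, u] = {v, u} := by
        simp only [Matrix.range_cons, Matrix.range_empty, Set.union_empty,
          Set.union_singleton]
        exact Set.pair_comm u v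
      rw [hr, Submodule.mem_span_pair] at hxP
      obtain ⟨a, b, hab⟩ := hxP
      rw [hmemW] at hxW
      have h1 : B v x = b := by
        rw [← hab]
        simp [map_add, map_smul, smul_eq_mul, halt v, hvu]
      have h0 : B x u = a := by
        rw [← hab]
        simp only [map_add, LinearMap.add_apply, map_smul, LinearMap.smul_apply,
          smul_eq_mul, halt u, hvu, mul_zero, mul_one, add_zero]
      have hxu : B x u = 0 := by rw [hskew x u, hxW.2]; ring
      have hb0 : b = 0 := by rw [← h1, hxW.1]
      have ha0 : a = 0 := by rw [← h0, hxu]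
      rw [← hab, hb0, ha0]
      simp
    have hspan : ⊤ ≤ Submodule.span R
        (Set.range (Sum.elim (fun i : Fin m => (c' i : M)) ![v, u])) := by
      intro x _
      have hx : x = (B x u) • v + (-(B x v)) • u + π x := by
        rw [hπ_apply]
        module
      rw [hx]
      refine Submodule.add_mem _ (Submodule.add_mem _ ?_ ?_) ?_
      · exact Submodule.smul_mem _ _
          (Submodule.subset_span ⟨Sum.inr ⟨0, by omega⟩, by simp⟩)
      · exact Submodule.smul_mem _ _
          (Submodule.subset_span ⟨Sum.inr ⟨1, by omega⟩, by simp⟩)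
      · have h1 : π x ∈ Submodule.span R (Set.range fun i : Fin m => (c' i : M)) := by
          rw [hspan_c]; exact hπ_mem x
        refine Submodule.span_mono ?_ h1
        rintro _ ⟨i, rfl⟩
        exact ⟨Sum.inl i, rfl⟩
    refine ⟨Module.Basis.mk (hli_c.sum_type hli_p hdisj) hspan, ?_, ?_, ?_⟩
    · intro i; rw [Module.Basis.mk_apply]; rfl
    · rw [Module.Basis.mk_apply]; rfl
    · rw [Module.Basis.mk_apply]; rfl
  -- cardinality
  obtain ⟨e0, -, -, -⟩ := key c
  have hcard : m + 2 = k := by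
    have h1 := Fintype.card_congr (e0.indexEquiv b0)
    simpa using h1
  -- Gram-standard basis of W
  have hBw : ∃ d : Module.Basis (Fin m) R W,
      ∀ i j : Fin m, B (d i : M) (d j : M) = stdJ R m i j := by
    by_cases hm : m = 0
    · subst hm
      exact ⟨c, fun i _ => i.elim0⟩
    · set Bw : W →ₗ[R] W →ₗ[R] R := B.domRestrict₁₂ W W with hBwdef
      have hBw_apply : ∀ x y : W, Bw x y = B (x : M) (y : M) := fun x y => rfl
      have halt_w : ∀ x : W, Bw x x = 0 := fun x => halt (x : M)
      have hsurj_w : ∀ φ : W →ₗ[R] R, ∃ y, Bw y = φ := by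
        intro φ
        obtain ⟨y, hy⟩ := hsurj (φ.comp πW)
        refine ⟨πW y, ?_⟩
        ext x
        rw [hBw_apply]
        have hx1 : B v (x : M) = 0 := ((hmemW (x : M)).mp x.2).1
        have hx2 : B u (x : M) = 0 := ((hmemW (x : M)).mp x.2).2
        have hπWy : (πW y : M) = π y := rfl
        rw [hπWy, hπ_apply]
        have hyx : B y (x : M) = φ x := by
          have := LinearMap.congr_fun hy (x : M)
          rw [this]
          simp only [LinearMap.comp_apply]
          congr 1
          apply Subtype.ext
          exact hπ_fix (x : M) x.2
        simp only [map_add, map_sub, LinearMap.add_apply, LinearMap.sub_apply,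
          map_smul, LinearMap.smul_apply, smul_eq_mul, hx1, hx2, mul_zero, add_zero, sub_zero]
        exact hyx
      have hm2 : m < k := by omega
      obtain ⟨d, -, hd⟩ := IH m hm2 W c Bw halt_w hsurj_w (c ⟨0, Nat.pos_of_ne_zero hm⟩)
        (c.coord ⟨0, Nat.pos_of_ne_zero hm⟩) (by simp)
      exact ⟨d, fun i j => hd i j⟩
  obtain ⟨d, hdGram⟩ := hBw
  obtain ⟨e, heL, heR0, heR1⟩ := key d
  -- reindex to Fin k
  have h2m : 2 + m = k := by omega
  set σ : (Fin m ⊕ Fin 2) ≃ Fin k :=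
    (Equiv.sumComm (Fin m) (Fin 2)).trans (finSumFinEquiv.trans (finCongr h2m)) with hσ
  have hσl : ∀ i : Fin m, ((σ (Sum.inl i) : Fin k) : ℕ) = 2 + (i : ℕ) := by
    intro i; simp [hσ, finCongr]
  have hσr : ∀ j : Fin 2, ((σ (Sum.inr j) : Fin k) : ℕ) = (j : ℕ) := by
    intro j; simp [hσ, finCongr]
  set b : Module.Basis (Fin k) R M := e.reindex σ with hb
  have hbσ : ∀ s, b (σ s) = e s := by
    intro s; rw [hb, Module.Basis.reindex_apply, Equiv.symm_apply_apply]
  -- values of B on pairs from {v, u, d i}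
  have hdW : ∀ i : Fin m, (d i : M) ∈ W := fun i => (d i).2
  have hBvd : ∀ i : Fin m, B v (d i : M) = 0 := fun i => ((hmemW _).mp (hdW i)).1
  have hBud : ∀ i : Fin m, B u (d i : M) = 0 := fun i => ((hmemW _).mp (hdW i)).2
  have hBdv : ∀ i : Fin m, B (d i : M) v = 0 := by
    intro i; rw [hskew, hBvd]; ring
  have hBdu : ∀ i : Fin m, B (d i : M) u = 0 := by
    intro i; rw [hskew, hBud]; ring
  have huv : B u v = -1 := by rw [hskew u v, hvu]
  refine ⟨b, ?_, ?_⟩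
  · intro hpos
    have h0 : σ (Sum.inr ⟨0, Nat.zero_lt_two⟩) = ⟨0, hpos⟩ := Fin.ext (hσr _)
    rw [← h0, hbσ, heR0]
  · have htwo : ∀ a : Fin 2, a = ⟨0, Nat.zero_lt_two⟩ ∨ a = ⟨1, Nat.one_lt_two⟩ := by decide
    have hσr0 : ((σ (Sum.inr ⟨0, Nat.zero_lt_two⟩) : Fin k) : ℕ) = 0 := hσr _
    have hσr1 : ((σ (Sum.inr ⟨1, Nat.one_lt_two⟩) : Fin k) : ℕ) = 1 := hσr _
    intro i j
    obtain ⟨s, rfl⟩ := σ.surjective i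
    obtain ⟨t, rfl⟩ := σ.surjective j
    rw [hbσ, hbσ]
    rcases s with i | a
    · rcases t with j | a'
      · -- both in W
        rw [heL i, heL j, hdGram i j]
        unfold stdJ
        rw [hσl i, hσl j]
        have h1 : ((2 + (i:ℕ)) % 2 = 0 ∧ (2 + (j:ℕ)) = (2 + (i:ℕ)) + 1)
            ↔ ((i:ℕ) % 2 = 0 ∧ (j:ℕ) = (i:ℕ) + 1) := by omega
        have h2 : ((2 + (j:ℕ)) % 2 = 0 ∧ (2 + (i:ℕ)) = (2 + (j:ℕ)) + 1)
            ↔ ((j:ℕ) % 2 = 0 ∧ (i:ℕ) = (j:ℕ) + 1) := by omega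
        rw [if_congr h1 rfl (if_congr h2 rfl rfl)]
      · rw [heL i]
        rcases htwo a' with rfl | rfl
        · rw [heR0, hBdv i]
          unfold stdJ
          rw [hσl i, hσr0]
          rw [if_neg (by omega), if_neg (by omega)]
        · rw [heR1, hBdu i]
          unfold stdJ
          rw [hσl i, hσr1]
          rw [if_neg (by omega), if_neg (by omega)]
    · rcases t with j | a'
      · rcases htwo a with rfl | rfl
        · rw [heL j, heR0, hBvd j]
          unfold stdJ
          rw [hσr0, hσl j]
          rw [if_neg (by omega), if_neg (by omega)]
        · rw [heL j, heR1, hBud j]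
          unfold stdJ
          rw [hσr1, hσl j]
          rw [if_neg (by omega), if_neg (by omega)]
      · rcases htwo a with rfl | rfl <;> rcases htwo a' with rfl | rfl
        · rw [heR0, halt v]
          unfold stdJ
          rw [hσr0]
          rw [if_neg (by omega), if_neg (by omega)]
        · rw [heR0, heR1, hvu]
          unfold stdJ
          rw [hσr0, hσr1]
          rw [if_pos (by omega)]
        · rw [heR1, heR0, huv]
          unfold stdJ
          rw [hσr1, hσr0]
          rw [if_neg (by omega), if_pos (by omega)]
        · rw [heR1, halt u]
          unfold stdJ
          rw [hσr1]
          rw [if_neg (by omega), if_neg (by omega)]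

end Ind
end SpAux

open SpAux in
/-- over a PID, the symplectic group `Sp_{2g}(R)` acts transitively on the set
of unimodular vectors of `R^{2g}`. -/
theorem Sp_transitive_unimodular
    (R : Type) [CommRing R] [IsDomain R] [IsPrincipalIdealRing R]
    (g : ℕ) (hg : 1 ≤ g) (v w : Fin (2 * g) → R)
    (hv : Ideal.span (Set.range v) = ⊤) (hw : Ideal.span (Set.range w) = ⊤) :
    ∃ A : (Fin (2 * g) → R) ≃ₗ[R] (Fin (2 * g) → R),
      (∀ x y, omegaH R (2 * g) (A x) (A y) = omegaH R (2 * g) x y) ∧ A v = w := by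
  classical
  have hn : (2 * g) % 2 = 0 := by omega
  have getf : ∀ z : Fin (2 * g) → R, Ideal.span (Set.range z) = ⊤ →
      ∃ f : (Fin (2 * g) → R) →ₗ[R] R, f z = 1 := by
    intro z hz
    have h1 : (1 : R) ∈ Ideal.span (Set.range z) := by rw [hz]; trivial
    rw [Ideal.mem_span_range_iff_exists_fun] at h1
    obtain ⟨cf, hcf⟩ := h1
    refine ⟨∑ i, cf i • LinearMap.proj i, ?_⟩
    simpa [LinearMap.proj_apply, smul_eq_mul] using hcf
  obtain ⟨fv, hfv⟩ := getf v hv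
  obtain ⟨fw, hfw⟩ := getf w hw
  obtain ⟨b, hb0, hbG⟩ := exists_symp_basis R (2 * g) (Fin (2 * g) → R) (Pi.basisFun R _)
    (Bform R (2 * g)) (Bform_alt _) (Bform_surj _ hn) v fv hfv
  obtain ⟨b', hb'0, hb'G⟩ := exists_symp_basis R (2 * g) (Fin (2 * g) → R) (Pi.basisFun R _)
    (Bform R (2 * g)) (Bform_alt _) (Bform_surj _ hn) w fw hfw
  set A := b.equiv b' (Equiv.refl _) with hA
  have hAb : ∀ i, A (b i) = b' i := by
    intro i
    rw [hA, Module.Basis.equiv_apply, Equiv.refl_apply]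
  have hAv : A v = w := by
    have hpos : 0 < 2 * g := by omega
    rw [← hb0 hpos, ← hb'0 hpos, hAb]
  refine ⟨A, ?_, hAv⟩
  have hext : (Bform R (2 * g)).compl₁₂ A.toLinearMap A.toLinearMap = Bform R (2 * g) := by
    apply LinearMap.ext_basis b b
    intro i j
    rw [LinearMap.compl₁₂_apply]
    simp only [LinearEquiv.coe_coe]
    rw [hAb i, hAb j, hb'G i j, hbG i j]
  intro x y
  rw [omegaH_eq_Bform, omegaH_eq_Bform]
  have h2 : (Bform R (2 * g)).compl₁₂ A.toLinearMap A.toLinearMap x y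
      = Bform R (2 * g) x y := by rw [hext]
  rw [LinearMap.compl₁₂_apply] at h2
  simpa using h2
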